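/- arXiv:1203.2212 — 2 statements merged into one kernel-verified Lean document; each statement's English description precedes it below -/
import Mathlib

section
/- (Hölder's inequality) Let f, g : ℝ → ℝ, α > 0, β > 0, and a, b ∈ ℝ with a < b, b ∈ A := {a + kα : k ∈ ℕ₀} and a ∈ B := {b − kβ : k ∈ ℕ₀}. Let p > 1 and q = p/(p−1). If |f| and |g| are α,β-symmetric integrable on [a,b], then |f·g|, |f|^p and |g|^q are α,β-symmetric integrable on [a,b] and ∫_a^b |f(t)·g(t)| d_{α,β}t ≤ (∫_a^b |f(t)|^p d_{α,β}t)^{1/p} · (∫_a^b |g(t)|^q d_{α,β}t)^{1/q}. -/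
/-- The α-forward integral (Nörlund sum) of `f` from `a` to `b`:
`∫_a^b f(t) Δ_α t = α·∑_{k=0}^∞ f(a+kα) − α·∑_{k=0}^∞ f(b+kα)`. -/
noncomputable def deltaInt (α : ℝ) (f : ℝ → ℝ) (a b : ℝ) : ℝ :=
  α * ∑' k : ℕ, f (a + k * α) - α * ∑' k : ℕ, f (b + k * α)

/-- `f` is α-forward integrable on `[a,b]`: both defining series converge. -/
def ForwardIntegrable (α : ℝ) (f : ℝ → ℝ) (a b : ℝ) : Prop :=
  Summable (fun k : ℕ => f (a + k * α)) ∧ Summable (fun k : ℕ => f (b + k * α))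

/-- The β-backward integral of `f` from `a` to `b`:
`∫_a^b f(t) ∇_β t = β·∑_{k=0}^∞ f(b−kβ) − β·∑_{k=0}^∞ f(a−kβ)`. -/
noncomputable def nablaInt (β : ℝ) (f : ℝ → ℝ) (a b : ℝ) : ℝ :=
  β * ∑' k : ℕ, f (b - k * β) - β * ∑' k : ℕ, f (a - k * β)

/-- `f` is β-backward integrable on `[a,b]`: both defining series converge. -/
def BackwardIntegrable (β : ℝ) (f : ℝ → ℝ) (a b : ℝ) : Prop :=
  Summable (fun k : ℕ => f (a - k * β)) ∧ Summable (fun k : ℕ => f (b - k * β))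

/-- `f` is α,β-symmetric integrable on `[a,b]`. -/
def SymIntegrable (α β : ℝ) (f : ℝ → ℝ) (a b : ℝ) : Prop :=
  ForwardIntegrable α f a b ∧ BackwardIntegrable β f a b

/-- The α,β-symmetric integral of `f` from `a` to `b`. -/
noncomputable def symInt (α β : ℝ) (f : ℝ → ℝ) (a b : ℝ) : ℝ :=
  (α / (α + β)) * deltaInt α f a b + (β / (α + β)) * nablaInt β f a b


/-- Summability of `u ^ r` for nonneg summable `u` and `r ≥ 1`. -/
lemma summable_rpow_aux {u : ℕ → ℝ} (h0 : ∀ k, 0 ≤ u k) (hu : Summable u) {r : ℝ}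
    (hr : 1 ≤ r) : Summable fun k => u k ^ r := by
  have ht : Filter.Tendsto u Filter.atTop (nhds 0) := hu.tendsto_atTop_zero
  have hev : ∀ᶠ k in Filter.atTop, u k < 1 := ht.eventually_lt_const zero_lt_one
  obtain ⟨K, hK⟩ := Filter.eventually_atTop.1 hev
  refine (summable_nat_add_iff K).1 ?_
  refine Summable.of_nonneg_of_le (fun k => Real.rpow_nonneg (h0 _) r)
    (fun k => ?_) ((summable_nat_add_iff K).2 hu)
  have h1 : u (k + K) ≤ 1 := (hK (k + K) (Nat.le_add_left K k)).le
  calc u (k + K) ^ r ≤ u (k + K) ^ (1 : ℝ) :=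
        Real.rpow_le_rpow_of_exponent_ge' (h0 _) h1 zero_le_one hr
    _ = u (k + K) := Real.rpow_one _

lemma summable_mul_aux {u v : ℕ → ℝ} (hu0 : ∀ k, 0 ≤ u k) (hv0 : ∀ k, 0 ≤ v k)
    {p q : ℝ} (hpq : Real.HolderConjugate p q)
    (hu : Summable fun k => u k ^ p) (hv : Summable fun k => v k ^ q) :
    Summable fun k => u k * v k := by
  refine Summable.of_nonneg_of_le (fun k => mul_nonneg (hu0 k) (hv0 k))
    (fun k => Real.young_inequality_of_nonneg (hu0 k) (hv0 k) hpq)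
    ((hu.div_const p).add (hv.div_const q))

lemma deltaInt_eq_sum_aux {α a b : ℝ} (h : ℝ → ℝ) {N : ℕ} (hb : b = a + N * α)
    (hs : Summable fun k : ℕ => h (a + k * α)) :
    deltaInt α h a b = α * ∑ k ∈ Finset.range N, h (a + k * α) := by
  have key := Summable.sum_add_tsum_nat_add (f := fun k : ℕ => h (a + k * α)) N hs
  have he : (fun k : ℕ => h (a + ((k + N : ℕ) : ℝ) * α)) = fun k : ℕ => h (b + k * α) := by
    funext k; congr 1; rw [hb]; push_cast; ring
  rw [he] at key
  unfold deltaInt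
  rw [← key]; ring

lemma nablaInt_eq_sum_aux {β a b : ℝ} (h : ℝ → ℝ) {M : ℕ} (ha : a = b - M * β)
    (hs : Summable fun k : ℕ => h (b - k * β)) :
    nablaInt β h a b = β * ∑ k ∈ Finset.range M, h (b - k * β) := by
  have key := Summable.sum_add_tsum_nat_add (f := fun k : ℕ => h (b - k * β)) M hs
  have he : (fun k : ℕ => h (b - ((k + M : ℕ) : ℝ) * β)) = fun k : ℕ => h (a - k * β) := by
    funext k; congr 1; rw [ha]; push_cast; ring
  rw [he] at key
  unfold nablaInt
  rw [← key]; ring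

theorem sym_holder_inequality (f g : ℝ → ℝ) (α β p q : ℝ) (hα : 0 < α) (hβ : 0 < β)
    (a b : ℝ) (hab : a < b) (hbA : ∃ k : ℕ, b = a + k * α) (haB : ∃ k : ℕ, a = b - k * β)
    (hp : 1 < p) (hq : q = p / (p - 1))
    (hf : SymIntegrable α β (fun t => |f t|) a b)
    (hg : SymIntegrable α β (fun t => |g t|) a b) :
    SymIntegrable α β (fun t => |f t * g t|) a b ∧
    SymIntegrable α β (fun t => |f t| ^ p) a b ∧
    SymIntegrable α β (fun t => |g t| ^ q) a b ∧
    symInt α β (fun t => |f t * g t|) a b ≤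
      (symInt α β (fun t => |f t| ^ p) a b) ^ (1 / p) *
        (symInt α β (fun t => |g t| ^ q) a b) ^ (1 / q) := by
  obtain ⟨N, hbN⟩ := hbA
  obtain ⟨M, haM⟩ := haB
  have hpq : Real.HolderConjugate p q := (Real.holderConjugate_iff_eq_conjExponent hp).2 hq
  have hq1 : 1 ≤ q := hpq.symm.lt.le
  -- summability of |f|^p
  have hfp : SymIntegrable α β (fun t => |f t| ^ p) a b :=
    ⟨⟨summable_rpow_aux (fun _ => abs_nonneg _) hf.1.1 hp.le,
      summable_rpow_aux (fun _ => abs_nonneg _) hf.1.2 hp.le⟩,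
     ⟨summable_rpow_aux (fun _ => abs_nonneg _) hf.2.1 hp.le,
      summable_rpow_aux (fun _ => abs_nonneg _) hf.2.2 hp.le⟩⟩
  have hgq : SymIntegrable α β (fun t => |g t| ^ q) a b :=
    ⟨⟨summable_rpow_aux (fun _ => abs_nonneg _) hg.1.1 hq1,
      summable_rpow_aux (fun _ => abs_nonneg _) hg.1.2 hq1⟩,
     ⟨summable_rpow_aux (fun _ => abs_nonneg _) hg.2.1 hq1,
      summable_rpow_aux (fun _ => abs_nonneg _) hg.2.2 hq1⟩⟩
  have habs : ∀ x : ℝ, |f x| * |g x| = |f x * g x| := fun x => (abs_mul _ _).symm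
  have hfg : SymIntegrable α β (fun t => |f t * g t|) a b :=
    ⟨⟨(summable_mul_aux (fun _ => abs_nonneg _) (fun _ => abs_nonneg _) hpq hfp.1.1
        hgq.1.1).congr (fun k => habs _),
      (summable_mul_aux (fun _ => abs_nonneg _) (fun _ => abs_nonneg _) hpq hfp.1.2
        hgq.1.2).congr (fun k => habs _)⟩,
     ⟨(summable_mul_aux (fun _ => abs_nonneg _) (fun _ => abs_nonneg _) hpq hfp.2.1
        hgq.2.1).congr (fun k => habs _),
      (summable_mul_aux (fun _ => abs_nonneg _) (fun _ => abs_nonneg _) hpq hfp.2.2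
        hgq.2.2).congr (fun k => habs _)⟩⟩
  refine ⟨hfg, hfp, hgq, ?_⟩
  -- weights and evaluation points
  set w1 : ℝ := α / (α + β) * α with hw1def
  set w2 : ℝ := β / (α + β) * β with hw2def
  have hab0 : 0 < α + β := by linarith
  have hw1 : 0 < w1 := mul_pos (div_pos hα hab0) hα
  have hw2 : 0 < w2 := mul_pos (div_pos hβ hab0) hβ
  set s : Finset (ℕ ⊕ ℕ) := (Finset.range N).disjSum (Finset.range M) with hsdef
  set x : ℕ ⊕ ℕ → ℝ := Sum.elim (fun k : ℕ => a + k * α) (fun k : ℕ => b - k * β) with hxdef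
  set w : ℕ ⊕ ℕ → ℝ := Sum.elim (fun _ => w1) (fun _ => w2) with hwdef
  have hwpos : ∀ i, 0 < w i := by rintro (i | i) <;> simp [hwdef, hw1, hw2]
  have hsum : ∀ h : ℝ → ℝ, SymIntegrable α β h a b →
      symInt α β h a b = ∑ i ∈ s, w i * h (x i) := by
    intro h hh
    have hsplit : ∑ i ∈ s, w i * h (x i)
        = w1 * ∑ k ∈ Finset.range N, h (a + k * α)
          + w2 * ∑ k ∈ Finset.range M, h (b - k * β) := by
      rw [hsdef, Finset.sum_disjSum, Finset.mul_sum, Finset.mul_sum]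
      simp [hwdef, hxdef]
    rw [hsplit]
    unfold symInt
    rw [deltaInt_eq_sum_aux h hbN hh.1.1, nablaInt_eq_sum_aux h haM hh.2.2]
    ring
  set F : ℕ ⊕ ℕ → ℝ := fun i => w i ^ (1 / p) * |f (x i)| with hFdef
  set G : ℕ ⊕ ℕ → ℝ := fun i => w i ^ (1 / q) * |g (x i)| with hGdef
  have hF0 : ∀ i ∈ s, 0 ≤ F i := fun i _ =>
    mul_nonneg (Real.rpow_nonneg (hwpos i).le _) (abs_nonneg _)
  have hG0 : ∀ i ∈ s, 0 ≤ G i := fun i _ =>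
    mul_nonneg (Real.rpow_nonneg (hwpos i).le _) (abs_nonneg _)
  have key := Real.inner_le_Lp_mul_Lq_of_nonneg s hpq hF0 hG0
  have e1 : ∑ i ∈ s, F i * G i = symInt α β (fun t => |f t * g t|) a b := by
    rw [hsum _ hfg]
    refine Finset.sum_congr rfl fun i _ => ?_
    have : w i ^ (1 / p) * w i ^ (1 / q) = w i := by
      rw [← Real.rpow_add (hwpos i), one_div, one_div, hpq.inv_add_inv_eq_one, Real.rpow_one]
    calc F i * G i = (w i ^ (1 / p) * w i ^ (1 / q)) * (|f (x i)| * |g (x i)|) := by ring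
      _ = w i * |f (x i) * g (x i)| := by rw [this, habs]
  have e2 : ∑ i ∈ s, F i ^ p = symInt α β (fun t => |f t| ^ p) a b := by
    rw [hsum _ hfp]
    refine Finset.sum_congr rfl fun i _ => ?_
    rw [hFdef]
    rw [Real.mul_rpow (Real.rpow_nonneg (hwpos i).le _) (abs_nonneg _),
      ← Real.rpow_mul (hwpos i).le, one_div_mul_cancel hpq.ne_zero, Real.rpow_one]
  have e3 : ∑ i ∈ s, G i ^ q = symInt α β (fun t => |g t| ^ q) a b := by
    rw [hsum _ hgq]
    refine Finset.sum_congr rfl fun i _ => ?_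
    rw [hGdef]
    rw [Real.mul_rpow (Real.rpow_nonneg (hwpos i).le _) (abs_nonneg _),
      ← Real.rpow_mul (hwpos i).le, one_div_mul_cancel hpq.symm.ne_zero, Real.rpow_one]
  rw [← e1, ← e2, ← e3]
  exact key
end

section
/- (Minkowski's inequality) Let f, g : ℝ → ℝ, α > 0, β > 0, p > 1, and a, b ∈ ℝ with a < b, b ∈ A := {a + kα : k ∈ ℕ₀} and a ∈ B := {b − kβ : k ∈ ℕ₀}. If |f| and |g| are α,β-symmetric integrable on [a,b], then |f+g|^p, |f|^p and |g|^p are α,β-symmetric integrable on [a,b] and (∫_a^b |f(t)+g(t)|^p d_{α,β}t)^{1/p} ≤ (∫_a^b |f(t)|^p d_{α,β}t)^{1/p} + (∫_a^b |g(t)|^p d_{α,β}t)^{1/p}. -/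
/-- If a nonnegative sequence is summable, so is its `p`-th power for `p ≥ 1`. -/
lemma summable_rpow_of_summable {p : ℝ} (hp : 1 ≤ p) {v : ℕ → ℝ} (hv0 : ∀ k, 0 ≤ v k)
    (hv : Summable v) : Summable (fun k => v k ^ p) := by
  set C : ℝ := max 1 (∑' j, v j) with hCdef
  have hC1 : (1 : ℝ) ≤ C := le_max_left _ _
  have hC0 : (0 : ℝ) ≤ C := by linarith
  have hvC : ∀ k, v k ≤ C := fun k =>
    le_trans (Summable.le_tsum hv k (fun j _ => hv0 j)) (le_max_right _ _)
  have hbd : ∀ k, v k ^ p ≤ C ^ (p - 1) * v k := by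
    intro k
    rcases eq_or_lt_of_le (hv0 k) with h0 | h0
    · rw [← h0, Real.zero_rpow (by linarith), mul_zero]
    · have h1 : v k ^ p = v k ^ (p - 1) * v k :=
        calc v k ^ p = v k ^ ((p - 1) + 1) := by ring_nf
        _ = v k ^ (p - 1) * v k ^ (1 : ℝ) := Real.rpow_add h0 _ _
        _ = v k ^ (p - 1) * v k := by rw [Real.rpow_one]
      rw [h1]
      exact mul_le_mul_of_nonneg_right
        (Real.rpow_le_rpow (hv0 k) (hvC k) (by linarith)) (hv0 k)
  exact Summable.of_nonneg_of_le (fun k => Real.rpow_nonneg (hv0 k) p) hbd (hv.mul_left _)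

/-- Summability of `|u|^p` from summability of `|u|`. -/
lemma summable_abs_rpow {p : ℝ} (hp : 1 ≤ p) {u : ℕ → ℝ}
    (hu : Summable (fun k => |u k|)) : Summable (fun k => |u k| ^ p) :=
  summable_rpow_of_summable hp (fun k => abs_nonneg _) hu

/-- Summability of `|u+v|^p` from summability of `|u|` and `|v|`. -/
lemma summable_abs_add_rpow {p : ℝ} (hp : 1 ≤ p) {u v : ℕ → ℝ}
    (hu : Summable (fun k => |u k|)) (hv : Summable (fun k => |v k|)) :
    Summable (fun k => |u k + v k| ^ p) := by
  have hsum : Summable (fun k => (|u k| + |v k|) ^ p) :=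
    summable_rpow_of_summable hp (fun k => by positivity) (hu.add hv)
  refine Summable.of_nonneg_of_le (fun k => Real.rpow_nonneg (abs_nonneg _) p)
    (fun k => Real.rpow_le_rpow (abs_nonneg _) (abs_add_le _ _) (by linarith)) hsum

/-- The forward series at `b = a + nα` is the tail of the series at `a`. -/
lemma forward_shift {h : ℝ → ℝ} {a b α : ℝ} {n : ℕ} (hb : b = a + n * α) :
    (fun k : ℕ => h (b + k * α)) = (fun k : ℕ => h (a + (k + n : ℕ) * α)) := by
  funext k; congr 1; rw [hb]; push_cast; ring

/-- The backward series at `a = b - mβ` is the tail of the series at `b`. -/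
lemma backward_shift {h : ℝ → ℝ} {a b β : ℝ} {m : ℕ} (ha : a = b - m * β) :
    (fun k : ℕ => h (a - k * β)) = (fun k : ℕ => h (b - (k + m : ℕ) * β)) := by
  funext k; congr 1; rw [ha]; push_cast; ring

lemma deltaInt_eq_finsum {h : ℝ → ℝ} {a b α : ℝ} {n : ℕ} (hb : b = a + n * α)
    (ha : Summable (fun k : ℕ => h (a + k * α))) :
    deltaInt α h a b = α * ∑ k ∈ Finset.range n, h (a + k * α) := by
  have key := Summable.sum_add_tsum_nat_add (f := fun k : ℕ => h (a + k * α)) n ha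
  unfold deltaInt
  rw [forward_shift hb, key.symm]
  ring

lemma nablaInt_eq_finsum {h : ℝ → ℝ} {a b β : ℝ} {m : ℕ} (ha : a = b - m * β)
    (hb : Summable (fun k : ℕ => h (b - k * β))) :
    nablaInt β h a b = β * ∑ k ∈ Finset.range m, h (b - k * β) := by
  have key := Summable.sum_add_tsum_nat_add (f := fun k : ℕ => h (b - k * β)) m hb
  unfold nablaInt
  rw [backward_shift ha, key.symm]
  ring

set_option maxHeartbeats 1000000 in
theorem sym_minkowski_inequality (f g : ℝ → ℝ) (α β p : ℝ) (hα : 0 < α) (hβ : 0 < β)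
    (a b : ℝ) (hab : a < b) (hbA : ∃ k : ℕ, b = a + k * α) (haB : ∃ k : ℕ, a = b - k * β) (hp : 1 < p)
    (hf : SymIntegrable α β (fun t => |f t|) a b)
    (hg : SymIntegrable α β (fun t => |g t|) a b) :
    SymIntegrable α β (fun t => |f t + g t| ^ p) a b ∧
    SymIntegrable α β (fun t => |f t| ^ p) a b ∧
    SymIntegrable α β (fun t => |g t| ^ p) a b ∧
    (symInt α β (fun t => |f t + g t| ^ p) a b) ^ (1 / p) ≤
      (symInt α β (fun t => |f t| ^ p) a b) ^ (1 / p) +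
        (symInt α β (fun t => |g t| ^ p) a b) ^ (1 / p) := by
  obtain ⟨n, hn⟩ := hbA
  obtain ⟨m, hm⟩ := haB
  obtain ⟨⟨hfFa, hfFb⟩, ⟨hfBa, hfBb⟩⟩ := hf
  obtain ⟨⟨hgFa, hgFb⟩, ⟨hgBa, hgBb⟩⟩ := hg
  have hp1 : 1 ≤ p := hp.le
  -- summability of the three p-th power functions along all four series
  have hFG : SymIntegrable α β (fun t => |f t + g t| ^ p) a b :=
    ⟨⟨summable_abs_add_rpow hp1 hfFa hgFa, summable_abs_add_rpow hp1 hfFb hgFb⟩,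
     ⟨summable_abs_add_rpow hp1 hfBa hgBa, summable_abs_add_rpow hp1 hfBb hgBb⟩⟩
  have hF : SymIntegrable α β (fun t => |f t| ^ p) a b :=
    ⟨⟨summable_abs_rpow hp1 hfFa, summable_abs_rpow hp1 hfFb⟩,
     ⟨summable_abs_rpow hp1 hfBa, summable_abs_rpow hp1 hfBb⟩⟩
  have hG : SymIntegrable α β (fun t => |g t| ^ p) a b :=
    ⟨⟨summable_abs_rpow hp1 hgFa, summable_abs_rpow hp1 hgFb⟩,
     ⟨summable_abs_rpow hp1 hgBa, summable_abs_rpow hp1 hgBb⟩⟩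
  refine ⟨hFG, hF, hG, ?_⟩
  -- express the symmetric integrals as finite weighted sums
  set wα : ℝ := (α / (α + β)) * α with hwα
  set wβ : ℝ := (β / (α + β)) * β with hwβ
  have hwα0 : 0 ≤ wα := by positivity
  have hwβ0 : 0 ≤ wβ := by positivity
  set s : Finset (ℕ ⊕ ℕ) := (Finset.range n).disjSum (Finset.range m) with hs
  set w : ℕ ⊕ ℕ → ℝ := Sum.elim (fun _ => wα) (fun _ => wβ) with hw
  set pt : ℕ ⊕ ℕ → ℝ := Sum.elim (fun k : ℕ => a + k * α) (fun k : ℕ => b - k * β) with hpt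
  have hw0 : ∀ i, 0 ≤ w i := by
    rintro (i | i)
    · exact hwα0
    · exact hwβ0
  have hkey : ∀ h : ℝ → ℝ, Summable (fun k : ℕ => h (a + k * α)) →
      Summable (fun k : ℕ => h (b - k * β)) →
      symInt α β h a b = ∑ i ∈ s, w i * h (pt i) := by
    intro h h1 h2
    rw [Finset.sum_disjSum]
    unfold symInt
    rw [deltaInt_eq_finsum hn h1, nablaInt_eq_finsum hm h2]
    simp only [hw, hpt, Sum.elim_inl, Sum.elim_inr, ← Finset.mul_sum, hwα, hwβ]
    ring
  have r1 := hkey (fun t => |f t + g t| ^ p) hFG.1.1 hFG.2.2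
  have r2 := hkey (fun t => |f t| ^ p) hF.1.1 hF.2.2
  have r3 := hkey (fun t => |g t| ^ p) hG.1.1 hG.2.2
  rw [r1, r2, r3]
  -- absorb the weights into the functions
  set F : ℕ ⊕ ℕ → ℝ := fun i => (w i) ^ (1 / p) * f (pt i) with hFdef
  set G : ℕ ⊕ ℕ → ℝ := fun i => (w i) ^ (1 / p) * g (pt i) with hGdef
  have hp0 : p ≠ 0 := by positivity
  have hwp : ∀ i, ((w i) ^ (1 / p)) ^ p = w i := by
    intro i
    rw [← Real.rpow_mul (hw0 i), one_div_mul_cancel hp0, Real.rpow_one]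
  have habs : ∀ (u : ℝ → ℝ) i, w i * |u (pt i)| ^ p = |(w i) ^ (1 / p) * u (pt i)| ^ p := by
    intro u i
    rw [abs_mul, abs_of_nonneg (Real.rpow_nonneg (hw0 i) _),
      Real.mul_rpow (Real.rpow_nonneg (hw0 i) _) (abs_nonneg _), hwp i]
  have e1 : ∀ i, w i * |f (pt i) + g (pt i)| ^ p = |F i + G i| ^ p := by
    intro i
    have := habs (fun t => f t + g t) i
    simp only [hFdef, hGdef]
    rw [this]
    congr 2
    ring
  have e2 : ∀ i, w i * |f (pt i)| ^ p = |F i| ^ p := fun i => habs f i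
  have e3 : ∀ i, w i * |g (pt i)| ^ p = |G i| ^ p := fun i => habs g i
  calc (∑ i ∈ s, w i * |f (pt i) + g (pt i)| ^ p) ^ (1 / p)
      = (∑ i ∈ s, |F i + G i| ^ p) ^ (1 / p) := by
        rw [Finset.sum_congr rfl (fun i _ => e1 i)]
    _ ≤ (∑ i ∈ s, |F i| ^ p) ^ (1 / p) + (∑ i ∈ s, |G i| ^ p) ^ (1 / p) :=
        Real.Lp_add_le s F G hp1
    _ = (∑ i ∈ s, w i * |f (pt i)| ^ p) ^ (1 / p) + (∑ i ∈ s, w i * |g (pt i)| ^ p) ^ (1 / p) := by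
        rw [Finset.sum_congr rfl (fun i _ => e2 i), Finset.sum_congr rfl (fun i _ => e3 i)]
end
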